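/- Let Ω ⊆ ℝ^d be measurable with Lebesgue measure, Δt > 0 and V₀ ∈ ℝ. Let u, v : Ω → ℂ be square-integrable and differentiable with gradients ∇u, ∇v, and let a, b : Ω → ℝ^d be measurable vector fields. Assume all the integrals below are well defined (their integrands are integrable): the integrand of B(a; (u+v)/2, (u−v)/Δt), (u+v)·conj(u−v), |(u−v)/Δt|², the integrands of B(a; u, u) and B(b; v, v), |v|²·((a+b)/2)·((a−b)/Δt) and f(v,v)·((a−b)/Δt). If the tested scheme identity holds, −i·‖(u−v)/Δt‖²_{L²} + (1/2)·B(a; (u+v)/2, (u−v)/Δt) + V₀·⟨(u+v)/2, (u−v)/Δt⟩_{L²} = 0, then the discrete Schrödinger energy identity holds: (1/(2Δt))·( B(a; u, u) − B(b; v, v) ) + (V₀/Δt)·( ‖u‖²_{L²} − ‖v‖²_{L²} ) = ∫_Ω |v|²·((a+b)/2)·((a−b)/Δt) dx + ∫_Ω f(v,v)·((a−b)/Δt) dx. -/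

import Mathlib

open Complex ComplexConjugate MeasureTheory

noncomputable section

open Metric Filter Set Topology ENNReal in
private lemma stmt9_aux_nonempty {d : ℕ} (Ω : Set (EuclideanSpace ℝ (Fin d)))
    (x : EuclideanSpace ℝ (Fin d)) (hx : x ∈ Ω)
    (hd : Tendsto (fun r => volume (Ω ∩ closedBall x r) / volume (closedBall x r)) (𝓝[>] 0) (𝓝 1))
    (y : EuclideanSpace ℝ (Fin d)) {ε : ℝ} (hε : 0 < ε) :
    ∃ r, 0 < r ∧ r < ε ∧ (Ω ∩ ball (x + r • y) (ε * r)).Nonempty := by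
  rcases eq_or_ne y 0 with rfl | hy
  · refine ⟨ε/2, by positivity, by linarith, ⟨x, hx, ?_⟩⟩
    simp only [smul_zero, add_zero, mem_ball, dist_self]
    positivity
  · by_contra h
    push_neg at h
    haveI : Nontrivial (EuclideanSpace ℝ (Fin d)) := nontrivial_of_ne y 0 hy
    set n := Module.finrank ℝ (EuclideanSpace ℝ (Fin d)) with hn
    set K := ‖y‖ + ε with hKdef
    have hK0 : 0 < K := by positivity
    set θ : ℝ≥0∞ := ENNReal.ofReal ((ε/K)^n) with hθdef
    have hθ0 : 0 < θ := ENNReal.ofReal_pos.2 (by positivity)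
    have hθ1 : θ ≤ 1 := ENNReal.ofReal_le_one.2 (pow_le_one₀ (by positivity)
      ((div_le_one hK0).2 (by simp [hKdef, norm_nonneg])))
    have hθtop : θ ≠ ⊤ := ENNReal.ofReal_ne_top
    have main : ∀ R, 0 < R → R < ε * K →
        volume (Ω ∩ closedBall x R) / volume (closedBall x R) + θ ≤ 1 := by
      intro R hR0 hRε
      set r := R / K with hrdef
      have hr0 : 0 < r := div_pos hR0 hK0
      have hrε : r < ε := by
        rw [hrdef, div_lt_iff₀ hK0]; linarith
      have hempty : Ω ∩ ball (x + r • y) (ε * r) = ∅ := h r hr0 hrε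
      have hsub : ball (x + r • y) (ε * r) ⊆ closedBall x R := by
        intro z hz
        rw [mem_closedBall]
        have h1 : dist z (x + r • y) < ε * r := hz
        have h2 : dist (x + r • y) x = r * ‖y‖ := by
          rw [dist_eq_norm, add_sub_cancel_left, norm_smul, Real.norm_eq_abs,
            abs_of_pos hr0]
        calc dist z x ≤ dist z (x + r • y) + dist (x + r • y) x := dist_triangle _ _ _
          _ ≤ ε * r + r * ‖y‖ := by rw [h2]; linarith
          _ = r * K := by rw [hKdef]; ring
          _ = R := by rw [hrdef]; field_simp
      have hdisj : Disjoint (Ω ∩ closedBall x R) (ball (x + r • y) (ε * r)) :=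
        Set.disjoint_of_subset_left Set.inter_subset_left
          (Set.disjoint_iff_inter_eq_empty.2 hempty)
      have hunion : volume (Ω ∩ closedBall x R) + volume (ball (x + r • y) (ε * r))
          ≤ volume (closedBall x R) := by
        rw [← measure_union hdisj measurableSet_ball]
        exact measure_mono (Set.union_subset Set.inter_subset_right hsub)
      have hAne : volume (closedBall x R) ≠ 0 := (measure_closedBall_pos volume x hR0).ne'
      have hAtop : volume (closedBall x R) ≠ ⊤ := measure_closedBall_lt_top.ne
      have hball : volume (ball (x + r • y) (ε * r)) = θ * volume (closedBall x R) := by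
        rw [Measure.addHaar_ball _ _ (by positivity : (0:ℝ) ≤ ε * r),
          Measure.addHaar_closedBall _ _ hR0.le, hθdef, ← mul_assoc,
          ← ENNReal.ofReal_mul (by positivity)]
        congr 2
        rw [hrdef]
        rw [← mul_pow]
        congr 1
        field_simp
      calc volume (Ω ∩ closedBall x R) / volume (closedBall x R) + θ
          = (volume (Ω ∩ closedBall x R) + θ * volume (closedBall x R))
              / volume (closedBall x R) := by
            rw [ENNReal.add_div, mul_div_assoc, ENNReal.div_self hAne hAtop, mul_one]
        _ ≤ volume (closedBall x R) / volume (closedBall x R) := by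
            apply ENNReal.div_le_div_right
            rw [← hball]; exact hunion
        _ = 1 := ENNReal.div_self hAne hAtop
    have h1 : (1:ℝ≥0∞) - θ < 1 := ENNReal.sub_lt_self one_ne_top one_ne_zero hθ0.ne'
    have hev : ∀ᶠ R in 𝓝[>] (0:ℝ),
        1 - θ < volume (Ω ∩ closedBall x R) / volume (closedBall x R) :=
      hd.eventually (eventually_gt_nhds h1)
    have hmem : Set.Ioo (0:ℝ) (ε*K) ∈ 𝓝[>] (0:ℝ) :=
      Ioo_mem_nhdsGT_of_mem ⟨le_rfl, by positivity⟩
    obtain ⟨R, hR1, hR2⟩ := (hev.and (eventually_of_mem hmem fun z hz => hz)).exists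
    have hle := main R hR2.1 hR2.2
    have : (1:ℝ≥0∞) < 1 := by
      calc (1:ℝ≥0∞) = (1 - θ) + θ := (tsub_add_cancel_of_le hθ1).symm
        _ < volume (Ω ∩ closedBall x R) / volume (closedBall x R) + θ :=
            ENNReal.add_lt_add_right hθtop hR1
        _ ≤ 1 := hle
    exact absurd this (lt_irrefl _)

open Metric Filter Set Topology ENNReal in
private lemma stmt9_mem_tangent {d : ℕ} (Ω : Set (EuclideanSpace ℝ (Fin d)))
    (x : EuclideanSpace ℝ (Fin d)) (hx : x ∈ Ω)
    (hd : Tendsto (fun r => volume (Ω ∩ closedBall x r) / volume (closedBall x r)) (𝓝[>] 0) (𝓝 1))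
    (y : EuclideanSpace ℝ (Fin d)) : y ∈ tangentConeAt ℝ Ω x := by
  have H : ∀ n : ℕ, ∃ r : ℝ, (0 < r ∧ r < 1/(n+1)) ∧
      ∃ z, z ∈ Ω ∧ dist z (x + r • y) < (1/(n+1)) * r := by
    intro n
    obtain ⟨r, h1, h2, z, hz1, hz2⟩ := stmt9_aux_nonempty Ω x hx hd y
      (by positivity : (0:ℝ) < 1/(n+1))
    exact ⟨r, ⟨h1, h2⟩, z, hz1, hz2⟩
  choose r hr z hzΩ hzb using H
  have hr0 : ∀ n, 0 < r n := fun n => (hr n).1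
  have hrlt : ∀ n, r n < 1/(n+1) := fun n => (hr n).2
  refine mem_tangentConeAt_iff_exists_seq_norm_tendsto_atTop.2 ⟨fun n => (r n)⁻¹, fun n => z n - x, ?_, ?_, ?_⟩
  swap
  · exact Eventually.of_forall fun n => by simpa using hzΩ n
  · have hb : ∀ n : ℕ, ((n:ℝ)+1) ≤ ‖(r n)⁻¹‖ := by
      intro n
      have h1 : ((n:ℝ)+1) ≤ (r n)⁻¹ := by
        rw [← one_div, le_div_iff₀ (hr0 n)]
        calc ((n:ℝ)+1) * r n ≤ ((n:ℝ)+1) * (1/(n+1)) := by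
              apply mul_le_mul_of_nonneg_left (hrlt n).le (by positivity)
          _ = 1 := by field_simp
      rwa [Real.norm_eq_abs, abs_of_pos (inv_pos.2 (hr0 n))]
    exact tendsto_atTop_mono hb
      (tendsto_atTop_add_const_right atTop 1 tendsto_natCast_atTop_atTop)
  · rw [tendsto_iff_norm_sub_tendsto_zero]
    apply squeeze_zero (fun n => norm_nonneg _) (g := fun n : ℕ => 1/(n+1))
    · intro n
      have heq : (r n)⁻¹ • (z n - x) - y = (r n)⁻¹ • (z n - (x + r n • y)) := by
        rw [smul_sub, sub_add_eq_sub_sub, smul_sub, smul_sub, inv_smul_smul₀ (hr0 n).ne']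
      rw [heq, norm_smul, Real.norm_eq_abs, abs_of_pos (inv_pos.2 (hr0 n)),
        ← dist_eq_norm]
      calc (r n)⁻¹ * dist (z n) (x + r n • y) ≤ (r n)⁻¹ * ((1/(n+1)) * r n) := by
            apply mul_le_mul_of_nonneg_left (hzb n).le (le_of_lt (inv_pos.2 (hr0 n)))
        _ = 1/(n+1) := by
            rw [mul_left_comm, inv_mul_cancel₀ (hr0 n).ne', mul_one]
    · exact tendsto_one_div_add_atTop_nhds_zero_nat

open Metric Filter Set Topology ENNReal in
private lemma stmt9_ae_uniqueDiff {d : ℕ} (Ω : Set (EuclideanSpace ℝ (Fin d)))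
    (hΩ : MeasurableSet Ω) :
    ∀ᵐ x ∂(volume.restrict Ω), UniqueDiffWithinAt ℝ Ω x := by
  filter_upwards [Besicovitch.ae_tendsto_measure_inter_div volume Ω,
    ae_restrict_mem hΩ] with x hx hmem
  refine ⟨?_, subset_closure hmem⟩
  have : tangentConeAt ℝ Ω x = Set.univ :=
    Set.eq_univ_of_forall (stmt9_mem_tangent Ω x hmem hx)
  rw [this, Submodule.span_univ]
  simpa using dense_univ

/-- The `j`-th component of the gradient of `f` on `Ω` (from the Fréchet derivative). -/
def gradW {d : ℕ} (Ω : Set (EuclideanSpace ℝ (Fin d)))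
    (f : EuclideanSpace ℝ (Fin d) → ℂ) (x : EuclideanSpace ℝ (Fin d)) (j : Fin d) : ℂ :=
  fderivWithin ℝ f Ω x (EuclideanSpace.single j 1)

/-- The integrand `⟨i∇ψ + ψa, i∇φ + φa⟩` of the magnetic form `B(a; ψ, φ)`. -/
def Bint {d : ℕ} (Ω : Set (EuclideanSpace ℝ (Fin d)))
    (a : EuclideanSpace ℝ (Fin d) → Fin d → ℝ)
    (ψ φ : EuclideanSpace ℝ (Fin d) → ℂ) (x : EuclideanSpace ℝ (Fin d)) : ℂ :=
  ∑ j, (Complex.I * gradW Ω ψ x j + ψ x * (a x j : ℂ))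
      * conj (Complex.I * gradW Ω φ x j + φ x * (a x j : ℂ))

/-- The magnetic sesquilinear form `B(a; ψ, φ) = ∫_Ω ⟨i∇ψ + ψa, i∇φ + φa⟩ dx`. -/
def Bform {d : ℕ} (Ω : Set (EuclideanSpace ℝ (Fin d)))
    (a : EuclideanSpace ℝ (Fin d) → Fin d → ℝ)
    (ψ φ : EuclideanSpace ℝ (Fin d) → ℂ) : ℂ :=
  ∫ x in Ω, Bint Ω a ψ φ x

private lemma stmt9_gradW_comb {d : ℕ} {Ω : Set (EuclideanSpace ℝ (Fin d))}
    {u v : EuclideanSpace ℝ (Fin d) → ℂ} {x : EuclideanSpace ℝ (Fin d)} (hx : x ∈ Ω)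
    (hxu : UniqueDiffWithinAt ℝ Ω x)
    (hud : DifferentiableOn ℝ u Ω) (hvd : DifferentiableOn ℝ v Ω) (c : ℂ) (j : Fin d) :
    gradW Ω (fun y => (u y + v y) / c) x j = (gradW Ω u x j + gradW Ω v x j) / c
    ∧ gradW Ω (fun y => (u y - v y) / c) x j = (gradW Ω u x j - gradW Ω v x j) / c := by
  have hu' := (hud x hx).hasFDerivWithinAt
  have hv' := (hvd x hx).hasFDerivWithinAt
  constructor
  · have hw : HasFDerivWithinAt (fun y => (u y + v y) / c)
        (c⁻¹ • (fderivWithin ℝ u Ω x + fderivWithin ℝ v Ω x)) Ω x := by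
      refine ((hu'.add hv').const_smul c⁻¹).congr' (fun y _ => ?_) hx; simp [div_eq_inv_mul, smul_eq_mul]
    rw [gradW, hw.fderivWithin hxu]
    simp [gradW, div_eq_inv_mul, smul_eq_mul, mul_add]
  · have hw : HasFDerivWithinAt (fun y => (u y - v y) / c)
        (c⁻¹ • (fderivWithin ℝ u Ω x - fderivWithin ℝ v Ω x)) Ω x := by
      refine ((hu'.sub hv').const_smul c⁻¹).congr' (fun y _ => ?_) hx; simp [div_eq_inv_mul, smul_eq_mul]
    rw [gradW, hw.fderivWithin hxu]
    simp [gradW, div_eq_inv_mul, smul_eq_mul, mul_sub]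

section Pointwise

variable {d : ℕ} {Ω : Set (EuclideanSpace ℝ (Fin d))} {u v : EuclideanSpace ℝ (Fin d) → ℂ}
  {a b : EuclideanSpace ℝ (Fin d) → Fin d → ℝ}

private lemma stmt9_ptB {Δt : ℝ} (hΔt : Δt ≠ 0) (x : EuclideanSpace ℝ (Fin d))
    (h1 : ∀ j, gradW Ω (fun y => (u y + v y) / 2) x j
      = (gradW Ω u x j + gradW Ω v x j) / 2)
    (h2 : ∀ j, gradW Ω (fun y => (u y - v y) / (Δt : ℂ)) x j
      = (gradW Ω u x j - gradW Ω v x j) / (Δt : ℂ)) :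
    Bint Ω a (fun y => (u y + v y) / 2) (fun y => (u y - v y) / (Δt : ℂ)) x
      + conj (Bint Ω a (fun y => (u y + v y) / 2) (fun y => (u y - v y) / (Δt : ℂ)) x)
    = (Δt : ℂ)⁻¹ * (Bint Ω a u u x - Bint Ω a v v x) := by
  have hΔ : (Δt : ℂ) ≠ 0 := Complex.ofReal_ne_zero.2 hΔt
  simp only [Bint, h1, h2, map_sum, ← Finset.sum_add_distrib, ← Finset.sum_sub_distrib,
    Finset.mul_sum]
  refine Finset.sum_congr rfl fun j _ => ?_
  simp only [map_add, map_mul, map_sub, map_div₀, Complex.conj_I, Complex.conj_ofReal,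
    Complex.conj_conj, map_ofNat, map_neg]
  field_simp
  ring

private lemma stmt9_ptS {Δt : ℝ} (hΔt : Δt ≠ 0) (x : EuclideanSpace ℝ (Fin d)) :
    (u x + v x) / 2 * conj ((u x - v x) / (Δt : ℂ))
      + conj ((u x + v x) / 2 * conj ((u x - v x) / (Δt : ℂ)))
    = (Δt : ℂ)⁻¹ * ((Complex.normSq (u x) : ℂ) - (Complex.normSq (v x) : ℂ)) := by
  have hΔ : (Δt : ℂ) ≠ 0 := Complex.ofReal_ne_zero.2 hΔt
  rw [← Complex.mul_conj, ← Complex.mul_conj]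
  simp only [map_add, map_mul, map_sub, map_div₀, Complex.conj_ofReal, Complex.conj_conj,
    map_ofNat]
  field_simp
  ring

private lemma stmt9_ptV {Δt : ℝ} (hΔt : Δt ≠ 0) (x : EuclideanSpace ℝ (Fin d)) :
    Bint Ω a v v x = Bint Ω b v v x
      + ((2 * Δt : ℝ) : ℂ) * (((Complex.normSq (v x)
          * ∑ j, ((a x j + b x j) / 2) * ((a x j - b x j) / Δt) : ℝ) : ℂ)
        + ∑ j, ((Complex.I / 2) * (conj (v x) * gradW Ω v x j
            - v x * conj (gradW Ω v x j))) * (((a x j - b x j) / Δt : ℝ) : ℂ)) := by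
  have hΔ : (Δt : ℂ) ≠ 0 := Complex.ofReal_ne_zero.2 hΔt
  push_cast
  rw [← Complex.mul_conj]
  simp only [Bint, Finset.mul_sum, ← Finset.sum_add_distrib, mul_add]
  refine Finset.sum_congr rfl fun j _ => ?_
  simp only [map_add, map_mul, Complex.conj_I, Complex.conj_ofReal]
  field_simp
  ring

end Pointwise

private lemma stmt9_integrable_conj {α : Type*} [MeasurableSpace α] {μ : Measure α}
    {f : α → ℂ} (h : Integrable f μ) :
    Integrable (fun x => (starRingEnd ℂ) (f x)) μ := by
  refine h.norm.mono' ?_ (Filter.Eventually.of_forall fun x => by simp)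
  exact continuous_star.comp_aestronglyMeasurable h.1

private lemma stmt9_normSq_int {α : Type*} [MeasurableSpace α] {μ : Measure α}
    {f : α → ℂ} (h : MemLp f 2 μ) :
    Integrable (fun x => Complex.normSq (f x)) μ := by
  refine (h.norm.integrable_sq).congr (Filter.Eventually.of_forall fun x => ?_)
  simp [Complex.normSq_eq_norm_sq]

private lemma stmt9_int_ofReal {α : Type*} [MeasurableSpace α] {μ : Measure α}
    {f : α → ℝ} (h : Integrable f μ) :
    Integrable (fun x => ((f x : ℝ) : ℂ)) μ := h.ofReal

private lemma stmt9_integral_ofReal {α : Type*} [MeasurableSpace α] {μ : Measure α}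
    (f : α → ℝ) :
    (∫ x, ((f x : ℝ) : ℂ) ∂μ) = ((∫ x, f x ∂μ : ℝ) : ℂ) := integral_ofReal

/-- Identity (3.13): testing the Crank–Nicolson Schrödinger scheme with `(u−v)/Δt` and
taking the real part yields the discrete Schrödinger energy identity. -/
theorem stmt9 (d : ℕ) (Ω : Set (EuclideanSpace ℝ (Fin d))) (hΩ : MeasurableSet Ω)
    (Δt : ℝ) (hΔt : 0 < Δt) (V₀ : ℝ)
    (u v : EuclideanSpace ℝ (Fin d) → ℂ)
    (a b : EuclideanSpace ℝ (Fin d) → Fin d → ℝ)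
    (hu2 : MemLp u 2 (volume.restrict Ω)) (hv2 : MemLp v 2 (volume.restrict Ω))
    (hud : DifferentiableOn ℝ u Ω) (hvd : DifferentiableOn ℝ v Ω)
    (ha : Measurable a) (hb : Measurable b)
    (hint1 : Integrable (Bint Ω a (fun x => (u x + v x) / 2)
        (fun x => (u x - v x) / (Δt : ℂ))) (volume.restrict Ω))
    (hint2 : Integrable (fun x => (u x + v x) * conj (u x - v x)) (volume.restrict Ω))
    (hint3 : Integrable (fun x => Complex.normSq ((u x - v x) / (Δt : ℂ)))
        (volume.restrict Ω))
    (hint4 : Integrable (Bint Ω a u u) (volume.restrict Ω))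
    (hint5 : Integrable (Bint Ω b v v) (volume.restrict Ω))
    (hint6 : Integrable (fun x => Complex.normSq (v x)
        * ∑ j, ((a x j + b x j) / 2) * ((a x j - b x j) / Δt)) (volume.restrict Ω))
    (hint7 : Integrable (fun x => ∑ j, ((Complex.I / 2) * (conj (v x) * gradW Ω v x j
        - v x * conj (gradW Ω v x j))) * (((a x j - b x j) / Δt : ℝ) : ℂ))
        (volume.restrict Ω))
    (heq : -Complex.I * ((∫ x in Ω, Complex.normSq ((u x - v x) / (Δt : ℂ)) : ℝ) : ℂ)
        + (1 / 2 : ℂ) * Bform Ω a (fun x => (u x + v x) / 2) (fun x => (u x - v x) / (Δt : ℂ))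
        + (V₀ : ℂ) * (∫ x in Ω, ((u x + v x) / 2) * conj ((u x - v x) / (Δt : ℂ))) = 0) :
    ((1 / (2 * Δt) : ℝ) : ℂ) * (Bform Ω a u u - Bform Ω b v v)
        + ((V₀ / Δt : ℝ) : ℂ) * (((∫ x in Ω, Complex.normSq (u x))
            - ∫ x in Ω, Complex.normSq (v x) : ℝ) : ℂ)
      = ((∫ x in Ω, Complex.normSq (v x)
            * ∑ j, ((a x j + b x j) / 2) * ((a x j - b x j) / Δt) : ℝ) : ℂ)
        + ∫ x in Ω, ∑ j, ((Complex.I / 2) * (conj (v x) * gradW Ω v x j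
            - v x * conj (gradW Ω v x j))) * (((a x j - b x j) / Δt : ℝ) : ℂ) := by
  have hΔr : Δt ≠ 0 := hΔt.ne'
  have hΔ : (Δt : ℂ) ≠ 0 := Complex.ofReal_ne_zero.2 hΔr
  have h2Δ : ((2 * Δt : ℝ) : ℂ) ≠ 0 := Complex.ofReal_ne_zero.2 (by positivity)
  have hBae : ∀ᵐ x ∂(volume.restrict Ω),
      Bint Ω a (fun y => (u y + v y) / 2) (fun y => (u y - v y) / (Δt : ℂ)) x
        + conj (Bint Ω a (fun y => (u y + v y) / 2) (fun y => (u y - v y) / (Δt : ℂ)) x)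
      = (Δt : ℂ)⁻¹ * (Bint Ω a u u x - Bint Ω a v v x) := by
    filter_upwards [ae_restrict_mem hΩ, stmt9_ae_uniqueDiff Ω hΩ] with x hx hxu
    exact stmt9_ptB hΔr x
      (fun j => (stmt9_gradW_comb hx hxu hud hvd 2 j).1)
      (fun j => (stmt9_gradW_comb hx hxu hud hvd (Δt : ℂ) j).2)
  have hint6' : Integrable (fun x => ((Complex.normSq (v x)
      * ∑ j, ((a x j + b x j) / 2) * ((a x j - b x j) / Δt) : ℝ) : ℂ)) (volume.restrict Ω) :=
    stmt9_int_ofReal hint6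
  have hintav : Integrable (Bint Ω a v v) (volume.restrict Ω) := by
    have h := (hint6'.add hint7).const_mul ((2 * Δt : ℝ) : ℂ)
    exact (hint5.add h).congr (Filter.Eventually.of_forall fun x => (stmt9_ptV hΔr x).symm)
  have hSint : Integrable (fun x => (u x + v x) / 2 * conj ((u x - v x) / (Δt : ℂ)))
      (volume.restrict Ω) := by
    have h := hint2.const_mul (((2 * Δt : ℝ) : ℂ)⁻¹)
    refine h.congr (Filter.Eventually.of_forall fun x => ?_)
    simp only [map_div₀, Complex.conj_ofReal]
    push_cast
    field_simp
  have hu2i : Integrable (fun x => Complex.normSq (u x)) (volume.restrict Ω) :=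
    stmt9_normSq_int hu2
  have hv2i : Integrable (fun x => Complex.normSq (v x)) (volume.restrict Ω) :=
    stmt9_normSq_int hv2
  have havv : (∫ x in Ω, Bint Ω a v v x) = Bform Ω b v v
      + ((2 * Δt : ℝ) : ℂ) * (((∫ x in Ω, Complex.normSq (v x)
            * ∑ j, ((a x j + b x j) / 2) * ((a x j - b x j) / Δt) : ℝ) : ℂ)
        + ∫ x in Ω, ∑ j, ((Complex.I / 2) * (conj (v x) * gradW Ω v x j
            - v x * conj (gradW Ω v x j))) * (((a x j - b x j) / Δt : ℝ) : ℂ)) := by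
    calc (∫ x in Ω, Bint Ω a v v x)
        = ∫ x in Ω, (Bint Ω b v v x + ((2 * Δt : ℝ) : ℂ) * (((Complex.normSq (v x)
              * ∑ j, ((a x j + b x j) / 2) * ((a x j - b x j) / Δt) : ℝ) : ℂ)
            + ∑ j, ((Complex.I / 2) * (conj (v x) * gradW Ω v x j
                - v x * conj (gradW Ω v x j))) * (((a x j - b x j) / Δt : ℝ) : ℂ))) :=
          integral_congr_ae (Filter.Eventually.of_forall fun x => stmt9_ptV hΔr x)
      _ = (∫ x in Ω, Bint Ω b v v x) + ∫ x in Ω, ((2 * Δt : ℝ) : ℂ)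
            * (((Complex.normSq (v x)
              * ∑ j, ((a x j + b x j) / 2) * ((a x j - b x j) / Δt) : ℝ) : ℂ)
            + ∑ j, ((Complex.I / 2) * (conj (v x) * gradW Ω v x j
                - v x * conj (gradW Ω v x j))) * (((a x j - b x j) / Δt : ℝ) : ℂ)) :=
          integral_add hint5 ((hint6'.add hint7).const_mul _)
      _ = (∫ x in Ω, Bint Ω b v v x) + ((2 * Δt : ℝ) : ℂ)
            * ∫ x in Ω, (((Complex.normSq (v x)
              * ∑ j, ((a x j + b x j) / 2) * ((a x j - b x j) / Δt) : ℝ) : ℂ)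
            + ∑ j, ((Complex.I / 2) * (conj (v x) * gradW Ω v x j
                - v x * conj (gradW Ω v x j))) * (((a x j - b x j) / Δt : ℝ) : ℂ)) := by
          rw [integral_const_mul]
      _ = (∫ x in Ω, Bint Ω b v v x) + ((2 * Δt : ℝ) : ℂ)
            * ((∫ x in Ω, ((Complex.normSq (v x)
              * ∑ j, ((a x j + b x j) / 2) * ((a x j - b x j) / Δt) : ℝ) : ℂ))
            + ∫ x in Ω, ∑ j, ((Complex.I / 2) * (conj (v x) * gradW Ω v x j
                - v x * conj (gradW Ω v x j))) * (((a x j - b x j) / Δt : ℝ) : ℂ)) := by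
          rw [integral_add hint6' hint7]
      _ = Bform Ω b v v + ((2 * Δt : ℝ) : ℂ) * (((∫ x in Ω, Complex.normSq (v x)
            * ∑ j, ((a x j + b x j) / 2) * ((a x j - b x j) / Δt) : ℝ) : ℂ)
          + ∫ x in Ω, ∑ j, ((Complex.I / 2) * (conj (v x) * gradW Ω v x j
              - v x * conj (gradW Ω v x j))) * (((a x j - b x j) / Δt : ℝ) : ℂ)) := by
          rw [stmt9_integral_ofReal]
          rfl
  have eB : Bform Ω a (fun y => (u y + v y) / 2) (fun y => (u y - v y) / (Δt : ℂ))
      + conj (Bform Ω a (fun y => (u y + v y) / 2) (fun y => (u y - v y) / (Δt : ℂ)))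
      = (Δt : ℂ)⁻¹ * (Bform Ω a u u - ∫ x in Ω, Bint Ω a v v x) := by
    calc Bform Ω a (fun y => (u y + v y) / 2) (fun y => (u y - v y) / (Δt : ℂ))
        + conj (Bform Ω a (fun y => (u y + v y) / 2) (fun y => (u y - v y) / (Δt : ℂ)))
        = ∫ x in Ω, (Bint Ω a (fun y => (u y + v y) / 2) (fun y => (u y - v y) / (Δt : ℂ)) x
            + conj (Bint Ω a (fun y => (u y + v y) / 2)
              (fun y => (u y - v y) / (Δt : ℂ)) x)) := by
          rw [Bform, ← integral_conj, ← integral_add hint1 (stmt9_integrable_conj hint1)]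
      _ = ∫ x in Ω, (Δt : ℂ)⁻¹ * (Bint Ω a u u x - Bint Ω a v v x) :=
          integral_congr_ae hBae
      _ = (Δt : ℂ)⁻¹ * ∫ x in Ω, (Bint Ω a u u x - Bint Ω a v v x) := integral_const_mul _ _
      _ = (Δt : ℂ)⁻¹ * (Bform Ω a u u - ∫ x in Ω, Bint Ω a v v x) := by
          rw [integral_sub hint4 hintav]
          rfl
  have eS : (∫ x in Ω, (u x + v x) / 2 * conj ((u x - v x) / (Δt : ℂ)))
      + conj (∫ x in Ω, (u x + v x) / 2 * conj ((u x - v x) / (Δt : ℂ)))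
      = (Δt : ℂ)⁻¹ * (((∫ x in Ω, Complex.normSq (u x) : ℝ) : ℂ)
          - ((∫ x in Ω, Complex.normSq (v x) : ℝ) : ℂ)) := by
    calc (∫ x in Ω, (u x + v x) / 2 * conj ((u x - v x) / (Δt : ℂ)))
        + conj (∫ x in Ω, (u x + v x) / 2 * conj ((u x - v x) / (Δt : ℂ)))
        = ∫ x in Ω, ((u x + v x) / 2 * conj ((u x - v x) / (Δt : ℂ))
            + conj ((u x + v x) / 2 * conj ((u x - v x) / (Δt : ℂ)))) := by
          rw [← integral_conj, ← integral_add hSint (stmt9_integrable_conj hSint)]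
      _ = ∫ x in Ω, (Δt : ℂ)⁻¹ * ((Complex.normSq (u x) : ℂ) - (Complex.normSq (v x) : ℂ)) :=
          integral_congr_ae (Filter.Eventually.of_forall fun x => stmt9_ptS hΔr x)
      _ = (Δt : ℂ)⁻¹ * ∫ x in Ω, ((Complex.normSq (u x) : ℂ) - (Complex.normSq (v x) : ℂ)) :=
          integral_const_mul _ _
      _ = (Δt : ℂ)⁻¹ * ((∫ x in Ω, (Complex.normSq (u x) : ℂ))
            - ∫ x in Ω, (Complex.normSq (v x) : ℂ)) := by
          rw [integral_sub (stmt9_int_ofReal hu2i) (stmt9_int_ofReal hv2i)]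
      _ = (Δt : ℂ)⁻¹ * (((∫ x in Ω, Complex.normSq (u x) : ℝ) : ℂ)
            - ((∫ x in Ω, Complex.normSq (v x) : ℝ) : ℂ)) := by
          rw [stmt9_integral_ofReal, stmt9_integral_ofReal]
  have hconj := congrArg (starRingEnd ℂ) heq
  simp only [map_add, map_mul, map_neg, map_zero, neg_neg, Complex.conj_I,
    Complex.conj_ofReal, (show (starRingEnd ℂ) (1/2 : ℂ) = 1/2 by rw [map_div₀, map_one, map_ofNat])] at hconj
  have comb : (1/2 : ℂ) * ((Δt : ℂ)⁻¹ * (Bform Ω a u u - ∫ x in Ω, Bint Ω a v v x))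
      + (V₀ : ℂ) * ((Δt : ℂ)⁻¹ * (((∫ x in Ω, Complex.normSq (u x) : ℝ) : ℂ)
          - ((∫ x in Ω, Complex.normSq (v x) : ℝ) : ℂ))) = 0 := by
    linear_combination heq + hconj - (1/2 : ℂ) * eB - (V₀ : ℂ) * eS
  rw [havv] at comb
  push_cast at comb ⊢
  field_simp at comb ⊢
  linear_combination comb

end
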